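/- Let x ∈ ℂ^m be a flat unit vector (every entry has absolute value 1/√m), and let v_x ∈ ℂ^{m³} be the tensor with entries (v_x)_{(i,j,k)} = x_i x_j conj(x_k). Then v_x lies in a fixed subspace of ℂ^{m³} (independent of x) of dimension at most m + m(m-1) + m(m-1)(m-2)/2 = m(m² - m + 2)/2. -/

import Mathlib

open Finset

lemma count_aux (m : ℕ) :
    ((Finset.univ.filter (fun p : Fin m × Fin m × Fin m =>
        p.1 ≤ p.2.1 ∧ p.2.2 ≠ p.1 ∧ p.2.2 ≠ p.2.1)).card : ℝ) + m
      ≤ m * ((m : ℝ) ^ 2 - m + 2) / 2 := by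
  rcases Nat.eq_zero_or_pos m with hm | hm
  · subst hm
    simp
  -- inner count over k
  have hk : ∀ i j : Fin m, ((univ.filter (fun k : Fin m => k ≠ i ∧ k ≠ j)).card : ℝ)
      = m - (if i = j then 1 else 2) := by
    intro i j
    have h1 : univ.filter (fun k : Fin m => k ≠ i ∧ k ≠ j) = univ \ {i, j} := by
      ext k; simp [not_or]
    rw [h1, card_sdiff_of_subset (subset_univ _)]
    by_cases hij : i = j
    · subst hij
      simp [card_univ, Nat.cast_sub hm]
    · have h2 : ({i, j} : Finset (Fin m)).card = 2 := card_pair hij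
      have hm2 : 2 ≤ m := by
        have : Nontrivial (Fin m) := ⟨⟨i, j, hij⟩⟩
        simpa [Nat.succ_le_iff] using Fintype.one_lt_card (α := Fin m)
      rw [h2, card_univ, Fintype.card_fin, Nat.cast_sub hm2]
      simp [hij]
  have key : ((Finset.univ.filter (fun p : Fin m × Fin m × Fin m =>
        p.1 ≤ p.2.1 ∧ p.2.2 ≠ p.1 ∧ p.2.2 ≠ p.2.1)).card : ℝ)
      = ∑ i : Fin m, ∑ j : Fin m,
          (if i ≤ j then ((m : ℝ) - (if i = j then 1 else 2)) else 0) := by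
    rw [← Finset.sum_boole]
    rw [Fintype.sum_prod_type]
    refine Finset.sum_congr rfl fun i _ => ?_
    rw [Fintype.sum_prod_type]
    refine Finset.sum_congr rfl fun j _ => ?_
    by_cases hij : i ≤ j
    · simp only [hij, if_true, true_and]
      rw [← hk i j, ← Finset.sum_boole]
    · simp [hij]
  rw [key]
  have split : ∀ i j : Fin m, (if i ≤ j then ((m : ℝ) - if i = j then 1 else 2) else 0)
      = (if j = i then (m : ℝ) - 1 else 0) + (if i < j then (m : ℝ) - 2 else 0) := by
    intro i j
    rcases lt_trichotomy i j with h | h | h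
    · simp [h, le_of_lt h, h.ne, h.ne']
    · simp [h]
    · simp [h.ne, h.ne', not_le.2 h, (not_lt.2 (le_of_lt h) : ¬ i < j)]
  simp_rw [split]
  have h1 : ∀ i : Fin m, ∑ j : Fin m,
      ((if j = i then (m : ℝ) - 1 else 0) + (if i < j then (m : ℝ) - 2 else 0))
      = ((m : ℝ) - 1) + ((m : ℝ) - 2) * ((m : ℝ) - 1 - (i : ℕ)) := by
    intro i
    rw [Finset.sum_add_distrib]
    congr 1
    · simp
    · rw [Finset.sum_ite, Finset.sum_const, Finset.sum_const_zero, add_zero,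
        Finset.filter_lt_eq_Ioi, Fin.card_Ioi, nsmul_eq_mul]
      have hi : (i : ℕ) ≤ m - 1 := Nat.le_sub_one_of_lt i.isLt
      rw [Nat.cast_sub hi, Nat.cast_sub hm]
      push_cast
      ring
  simp_rw [h1]
  rw [Finset.sum_add_distrib, Finset.sum_const, ← Finset.mul_sum]
  have hS : ∑ i : Fin m, ((m : ℝ) - 1 - (i : ℕ)) = m * ((m : ℝ) - 1) / 2 := by
    have hg : ((∑ i ∈ Finset.range m, i : ℕ) : ℝ) * 2 = m * ((m : ℝ) - 1) := by
      have h := congrArg (Nat.cast : ℕ → ℝ) (Finset.sum_range_id_mul_two m)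
      rw [Nat.cast_mul, Nat.cast_mul, Nat.cast_sub hm] at h
      push_cast at h ⊢
      linarith
    have hs2 : ∑ i : Fin m, ((i : ℕ) : ℝ) = m * ((m : ℝ) - 1) / 2 := by
      rw [Fin.sum_univ_eq_sum_range (fun i => ((i : ℕ) : ℝ)) m]
      push_cast at hg ⊢
      linarith
    rw [Finset.sum_sub_distrib, hs2, Finset.sum_const]
    simp [Finset.card_univ]
    ring
  rw [hS]
  simp only [Finset.card_univ, Fintype.card_fin, nsmul_eq_mul]
  ring_nf
  nlinarith [sq_nonneg ((m:ℝ))]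

theorem stmt_4 (m : ℕ)
    (v : EuclideanSpace ℂ (Fin m) → EuclideanSpace ℂ (Fin m × Fin m × Fin m))
    (hv : ∀ x, ∀ p : Fin m × Fin m × Fin m,
      v x p = x p.1 * x p.2.1 * starRingEnd ℂ (x p.2.2)) :
    ∃ W : Submodule ℂ (EuclideanSpace ℂ (Fin m × Fin m × Fin m)),
      (Module.finrank ℂ W : ℝ) ≤ m * (m ^ 2 - m + 2) / 2 ∧
      ∀ x : EuclideanSpace ℂ (Fin m),
        (∀ i, ‖x i‖ = 1 / Real.sqrt m) → v x ∈ W := by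
  set K : Submodule ℂ (EuclideanSpace ℂ (Fin m × Fin m × Fin m)) :=
    { carrier := {w | (∀ i j k : Fin m, w (i, j, k) = w (j, i, k)) ∧
        ∀ i j : Fin m, w (i, j, j) = w (i, i, i)}
      add_mem' := by
        rintro a b ⟨ha1, ha2⟩ ⟨hb1, hb2⟩
        refine ⟨fun i j k => ?_, fun i j => ?_⟩
        · show a (i, j, k) + b (i, j, k) = a (j, i, k) + b (j, i, k)
          rw [ha1, hb1]
        · show a (i, j, j) + b (i, j, j) = a (i, i, i) + b (i, i, i)
          rw [ha2, hb2]
      zero_mem' := ⟨fun _ _ _ => rfl, fun _ _ => rfl⟩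
      smul_mem' := by
        rintro c a ⟨ha1, ha2⟩
        refine ⟨fun i j k => ?_, fun i j => ?_⟩
        · show c * a (i, j, k) = c * a (j, i, k)
          rw [ha1]
        · show c * a (i, j, j) = c * a (i, i, i)
          rw [ha2] } with hK
  have hKmem : ∀ w : EuclideanSpace ℂ (Fin m × Fin m × Fin m),
      w ∈ K ↔ ((∀ i j k : Fin m, w (i, j, k) = w (j, i, k)) ∧
        ∀ i j : Fin m, w (i, j, j) = w (i, i, i)) := fun _ => Iff.rfl
  refine ⟨K, ?_, ?_⟩
  · -- dimension bound
    set G := {p : Fin m × Fin m × Fin m // p.1 ≤ p.2.1 ∧ p.2.2 ≠ p.1 ∧ p.2.2 ≠ p.2.1} with hG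
    let φ : K →ₗ[ℂ] ((G ⊕ Fin m) → ℂ) :=
      { toFun := fun w => Sum.elim (fun p => (w : EuclideanSpace ℂ (Fin m × Fin m × Fin m)) p.1)
          (fun i => (w : EuclideanSpace ℂ (Fin m × Fin m × Fin m)) (i, i, i))
        map_add' := by intro a b; funext s; cases s <;> rfl
        map_smul' := by intro c a; funext s; cases s <;> rfl }
    have hker : ∀ w : K, φ w = 0 → w = 0 := by
      intro w hw
      have h0 : ∀ p : Fin m × Fin m × Fin m,
          (p.1 ≤ p.2.1 ∧ p.2.2 ≠ p.1 ∧ p.2.2 ≠ p.2.1) →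
          (w : EuclideanSpace ℂ (Fin m × Fin m × Fin m)) p = 0 :=
        fun p hp => congrFun hw (Sum.inl ⟨p, hp⟩)
      have hd : ∀ i : Fin m, (w : EuclideanSpace ℂ (Fin m × Fin m × Fin m)) (i, i, i) = 0 :=
        fun i => congrFun hw (Sum.inr i)
      obtain ⟨hsym, hdia⟩ := w.2
      have main : ∀ i j k : Fin m, i ≤ j →
          (w : EuclideanSpace ℂ (Fin m × Fin m × Fin m)) (i, j, k) = 0 := by
        intro i j k hij
        by_cases hkj : k = j
        · subst hkj; rw [hdia i k]; exact hd i
        · by_cases hki : k = i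
          · rw [hki, hsym i j i, hdia j i]; exact hd j
          · exact h0 (i, j, k) ⟨hij, hki, hkj⟩
      apply Subtype.ext
      refine PiLp.ext fun p => ?_
      obtain ⟨i, j, k⟩ := p
      show (w : EuclideanSpace ℂ (Fin m × Fin m × Fin m)) (i, j, k) = 0
      rcases le_total i j with h | h
      · exact main i j k h
      · rw [hsym i j k]; exact main j i k h
    have hinj : Function.Injective φ := by
      rw [← LinearMap.ker_eq_bot, LinearMap.ker_eq_bot']
      exact hker
    have hfin : Module.finrank ℂ K ≤ Fintype.card G + m := by
      have h1 := LinearMap.finrank_le_finrank_of_injective hinj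
      rwa [Module.finrank_pi ℂ, Fintype.card_sum, Fintype.card_fin] at h1
    have hcard : Fintype.card G = (Finset.univ.filter (fun p : Fin m × Fin m × Fin m =>
        p.1 ≤ p.2.1 ∧ p.2.2 ≠ p.1 ∧ p.2.2 ≠ p.2.1)).card := Fintype.card_subtype _
    calc (Module.finrank ℂ K : ℝ) ≤ ((Fintype.card G + m : ℕ) : ℝ) := by
          exact_mod_cast hfin
      _ = ((Finset.univ.filter (fun p : Fin m × Fin m × Fin m =>
            p.1 ≤ p.2.1 ∧ p.2.2 ≠ p.1 ∧ p.2.2 ≠ p.2.1)).card : ℝ) + m := by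
          rw [hcard]; push_cast; ring
      _ ≤ m * ((m : ℝ) ^ 2 - m + 2) / 2 := count_aux m
  · -- membership
    intro x hx
    rw [hKmem]
    have hns : ∀ j : Fin m, x j * starRingEnd ℂ (x j) = ((m : ℝ)⁻¹ : ℂ) := by
      intro j
      rw [Complex.mul_conj]
      norm_cast
      rw [← Complex.sq_norm, hx j, div_pow, one_pow, Real.sq_sqrt (Nat.cast_nonneg m), one_div]
    refine ⟨fun i j k => ?_, fun i j => ?_⟩
    · rw [hv x (i, j, k), hv x (j, i, k)]
      ring
    · rw [hv x (i, j, j), hv x (i, i, i)]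
      show x i * x j * starRingEnd ℂ (x j) = x i * x i * starRingEnd ℂ (x i)
      rw [mul_assoc, mul_assoc, hns j, hns i]
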